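/- Assume that for all f ∈ P and all g, γ with sp(g) < γ (every element of sp(g) is < γ) one has sp(fg) < v(f) + γ. Then P is a subgroup of F^× (i.e., 1 ∈ P, P is closed under products and inverses). -/

import Mathlib

section helpers

variable {F : Type*} [Field F] {Γ : Type*} [AddCommGroup Γ] [LinearOrder Γ] [IsOrderedAddMonoid Γ]
variable {v : F → WithTop Γ} {tr : F → Γ → F}

lemma v_one' (hv0 : ∀ f : F, v f = ⊤ ↔ f = 0) (hvm : ∀ f g : F, v (f * g) = v f + v g) :
    v (1 : F) = 0 := by
  have h := hvm 1 1
  rw [mul_one] at h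
  have h1 : v (1:F) ≠ ⊤ := fun ht => one_ne_zero ((hv0 1).1 ht)
  lift v (1:F) to Γ using h1 with a ha
  have h2 : a = a + a := by exact_mod_cast h
  have h3 : a = 0 := add_left_cancel (a := a) (b := a) (c := 0) (by rw [add_zero]; exact h2.symm)
  exact_mod_cast congrArg (fun x : Γ => (x : WithTop Γ)) h3

lemma v_neg' (hv0 : ∀ f : F, v f = ⊤ ↔ f = 0) (hvm : ∀ f g : F, v (f * g) = v f + v g)
    (x : F) : v (-x) = v x := by
  have hm1 : v (-1 : F) = 0 := by
    have h := hvm (-1) (-1)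
    rw [neg_mul_neg, one_mul, v_one' hv0 hvm] at h
    have h1 : v (-1:F) ≠ ⊤ := fun ht => by
      have := (hv0 (-1)).1 ht; exact one_ne_zero (neg_eq_zero.mp this)
    lift v (-1:F) to Γ using h1 with a ha
    have h2 : a + a = (0:Γ) := by exact_mod_cast h.symm
    have h3 : a = 0 := by
      rcases lt_trichotomy a 0 with hl | he | hg
      · have hz : a + a < 0 + 0 := add_lt_add hl hl
        rw [h2, add_zero] at hz; exact absurd hz (lt_irrefl 0)
      · exact he
      · have hz : 0 + 0 < a + a := add_lt_add hg hg
        rw [h2, add_zero] at hz; exact absurd hz (lt_irrefl 0)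
    exact_mod_cast congrArg (fun x : Γ => (x : WithTop Γ)) h3
  calc v (-x) = v ((-1) * x) := by rw [neg_one_mul]
    _ = v (-1) + v x := hvm _ _
    _ = v x := by rw [hm1, zero_add]

lemma v_sub_of_lt' (hv0 : ∀ f : F, v f = ⊤ ↔ f = 0) (hvm : ∀ f g : F, v (f * g) = v f + v g)
    (hva : ∀ f g : F, min (v f) (v g) ≤ v (f + g))
    {x y : F} (h : v y < v x) : v (x - y) = v y := by
  have hneg : ∀ z : F, v (-z) = v z := v_neg' hv0 hvm
  have h1 : v y ≤ v (x - y) := by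
    calc v y = min (v x) (v y) := (min_eq_right h.le).symm
      _ = min (v x) (v (-y)) := by rw [hneg]
      _ ≤ v (x + -y) := hva x (-y)
      _ = v (x - y) := by rw [← sub_eq_add_neg]
  have h2 : v (x - y) ≤ v y := by
    by_contra hc
    push_neg at hc
    have h3 := hva (x - y) (-x)
    have he : (x - y) + -x = -y := by ring
    rw [he, hneg, hneg] at h3
    exact absurd h3 (not_le.mpr (lt_min hc h))
  exact le_antisymm h2 h1

lemma v_add_of_lt' (hv0 : ∀ f : F, v f = ⊤ ↔ f = 0) (hvm : ∀ f g : F, v (f * g) = v f + v g)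
    (hva : ∀ f g : F, min (v f) (v g) ≤ v (f + g))
    {x y : F} (h : v y < v x) : v (x + y) = v y := by
  have hneg := v_neg' hv0 hvm
  have hx : v (-y) < v x := by rw [hneg]; exact h
  have hs := v_sub_of_lt' hv0 hvm hva hx
  rw [sub_neg_eq_add, hneg] at hs
  exact hs

/-- If `v A = α ↔ v (A + z) = α` when `α < v z`. -/
lemma v_add_iff' (hv0 : ∀ f : F, v f = ⊤ ↔ f = 0) (hvm : ∀ f g : F, v (f * g) = v f + v g)
    (hva : ∀ f g : F, min (v f) (v g) ≤ v (f + g))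
    {A z : F} {α : Γ} (hz : (α : WithTop Γ) < v z) : v (A + z) = α ↔ v A = α := by
  rcases lt_trichotomy (v A) (v z) with h | h | h
  · rw [add_comm, v_add_of_lt' hv0 hvm hva h]
  · constructor
    · intro hc
      have : (α : WithTop Γ) < v (A + z) := lt_of_lt_of_le hz (by
        have := hva A z
        rw [h, min_self] at this
        exact this)
      exact absurd hc (ne_of_gt this)
    · intro hc
      rw [hc] at h
      exact absurd h.symm (ne_of_gt hz)
  · rw [v_add_of_lt' hv0 hvm hva h]
    constructor
    · intro hc; exact absurd (hc ▸ hz) (lt_irrefl _)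
    · intro hc; exact absurd (hc ▸ lt_trans hz h) (lt_irrefl _)

lemma tr_tr' (T1 : ∀ (f : F) (α : Γ), (α : WithTop Γ) ≤ v (f - tr f α))
    (T2 : ∀ (f : F) (α : Γ), (α : WithTop Γ) ≤ v f → tr f α = 0)
    (T4a : ∀ (f g : F) (α : Γ), tr (f + g) α = tr f α + tr g α)
    {f : F} {α β : Γ} (h : α ≤ β) : tr (tr f β) α = tr f α := by
  have h4 := T4a (f - tr f β) (tr f β) α
  rw [sub_add_cancel] at h4
  have h0 : tr (f - tr f β) α = 0 :=
    T2 _ _ (le_trans (by exact_mod_cast h) (T1 f β))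
  rw [h0, zero_add] at h4
  exact h4.symm

lemma mem_sp_tr' (hv0 : ∀ f : F, v f = ⊤ ↔ f = 0) (hvm : ∀ f g : F, v (f * g) = v f + v g)
    (hva : ∀ f g : F, min (v f) (v g) ≤ v (f + g))
    (T1 : ∀ (f : F) (α : Γ), (α : WithTop Γ) ≤ v (f - tr f α))
    (T2 : ∀ (f : F) (α : Γ), (α : WithTop Γ) ≤ v f → tr f α = 0)
    (T4a : ∀ (f g : F) (α : Γ), tr (f + g) α = tr f α + tr g α)
    {f : F} {α β : Γ} (hab : α < β) :
    v (tr f β - tr (tr f β) α) = α ↔ v (f - tr f α) = α := by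
  rw [tr_tr' T1 T2 T4a hab.le]
  have he : tr f β - tr f α = (f - tr f α) + (tr f β - f) := by ring
  rw [he]
  apply v_add_iff' hv0 hvm hva
  have : v (tr f β - f) = v (f - tr f β) := by
    rw [← neg_sub f (tr f β), v_neg' hv0 hvm]
  rw [this]
  exact lt_of_lt_of_le (by exact_mod_cast hab) (T1 f β)

lemma not_mem_sp_tr' (hv0 : ∀ f : F, v f = ⊤ ↔ f = 0)
    (T1 : ∀ (f : F) (α : Γ), (α : WithTop Γ) ≤ v (f - tr f α))
    (T2 : ∀ (f : F) (α : Γ), (α : WithTop Γ) ≤ v f → tr f α = 0)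
    (T3 : ∀ (f : F) (α β : Γ), α < β → tr (tr f α) β = tr f α)
    (T4a : ∀ (f g : F) (α : Γ), tr (f + g) α = tr f α + tr g α)
    {f : F} {α β : Γ} (h : β ≤ α) : v (tr f β - tr (tr f β) α) ≠ α := by
  have heq : tr (tr f β) α = tr f β := by
    rcases eq_or_lt_of_le h with rfl | hlt
    · exact tr_tr' T1 T2 T4a le_rfl
    · exact T3 f β α hlt
  rw [heq, sub_self, (hv0 0).2 rfl]
  exact fun hc => WithTop.coe_ne_top hc.symm

lemma sp_lower' (T2 : ∀ (f : F) (α : Γ), (α : WithTop Γ) ≤ v f → tr f α = 0)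
    {x : F} {γ : Γ} (h : v (x - tr x γ) = γ) : v x ≤ (γ : WithTop Γ) := by
  by_contra hc
  push_neg at hc
  rw [T2 x γ hc.le, sub_zero] at h
  exact absurd h (ne_of_gt hc)

lemma v_mem_sp' (T2 : ∀ (f : F) (α : Γ), (α : WithTop Γ) ≤ v f → tr f α = 0)
    {x : F} {a : Γ} (h : v x = (a : WithTop Γ)) : v (x - tr x a) = (a : WithTop Γ) := by
  rw [T2 x a (le_of_eq h.symm), sub_zero]
  exact h

end helpers

theorem stmt_17
    (F : Type*) [Field F] (Γ : Type*) [AddCommGroup Γ] [LinearOrder Γ] [IsOrderedAddMonoid Γ]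
    (v : F → WithTop Γ)
    (hv0 : ∀ f : F, v f = ⊤ ↔ f = 0)
    (hvm : ∀ f g : F, v (f * g) = v f + v g)
    (hva : ∀ f g : F, min (v f) (v g) ≤ v (f + g))
    (C : Subfield F)
    (hC1 : ∀ c ∈ C, c ≠ 0 → v c = 0)
    (hC2 : ∀ f : F, v f = 0 → ∃ c ∈ C, 0 < v (f - c))
    (tr : F → Γ → F)
    (T1 : ∀ (f : F) (α : Γ), (α : WithTop Γ) ≤ v (f - tr f α))
    (T2 : ∀ (f : F) (α : Γ), (α : WithTop Γ) ≤ v f → tr f α = 0)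
    (T3 : ∀ (f : F) (α β : Γ), α < β → tr (tr f α) β = tr f α)
    (T4a : ∀ (f g : F) (α : Γ), tr (f + g) α = tr f α + tr g α)
    (T4s : ∀ c ∈ C, ∀ (f : F) (α : Γ), tr (c * f) α = c * tr f α)
    (T5 : ∀ f : F, {γ : Γ | v (f - tr f γ) = (γ : WithTop Γ)}.IsWF)
    (hyp : ∀ f : F, (∃ δ : Γ, {γ : Γ | v (f - tr f γ) = (γ : WithTop Γ)} = {δ}) →
      ∀ (g : F) (γ : Γ), (∀ β ∈ {γ' : Γ | v (g - tr g γ') = (γ' : WithTop Γ)}, β < γ) →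
        ∀ δ ∈ {γ' : Γ | v (f * g - tr (f * g) γ') = (γ' : WithTop Γ)},
          (δ : WithTop Γ) < v f + (γ : WithTop Γ)) :
    (∃ δ : Γ, {γ : Γ | v ((1 : F) - tr 1 γ) = (γ : WithTop Γ)} = {δ}) ∧
    (∀ f g : F, (∃ δ : Γ, {γ : Γ | v (f - tr f γ) = (γ : WithTop Γ)} = {δ}) →
      (∃ δ : Γ, {γ : Γ | v (g - tr g γ) = (γ : WithTop Γ)} = {δ}) →
      ∃ δ : Γ, {γ : Γ | v (f * g - tr (f * g) γ) = (γ : WithTop Γ)} = {δ}) ∧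
    (∀ f : F, (∃ δ : Γ, {γ : Γ | v (f - tr f γ) = (γ : WithTop Γ)} = {δ}) →
      ∃ δ : Γ, {γ : Γ | v (f⁻¹ - tr f⁻¹ γ) = (γ : WithTop Γ)} = {δ}) := by
  have hvone : v (1:F) = 0 := v_one' hv0 hvm
  have hneg : ∀ z : F, v (-z) = v z := v_neg' hv0 hvm
  -- Part 1 : sp 1 = {0}
  have h0mem : v ((1:F) - tr 1 0) = ((0:Γ) : WithTop Γ) := by
    apply v_mem_sp' T2
    rw [hvone, WithTop.coe_zero]
  have part1 : {γ : Γ | v ((1 : F) - tr 1 γ) = (γ : WithTop Γ)} = {(0:Γ)} := by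
    apply Set.eq_singleton_iff_unique_mem.mpr
    refine ⟨h0mem, ?_⟩
    intro x hx
    simp only [Set.mem_setOf_eq] at hx
    by_contra hne
    have hwf : ({γ : Γ | v ((1:F) - tr 1 γ) = (γ:WithTop Γ)} \ {0}).IsWF :=
      (T5 1).mono Set.diff_subset
    have hSne : ({γ : Γ | v ((1:F) - tr 1 γ) = (γ:WithTop Γ)} \ {0}).Nonempty :=
      ⟨x, hx, hne⟩
    set γ := hwf.min hSne with hγdef
    have hγS := hwf.min_mem hSne
    have hγsp : v ((1:F) - tr 1 γ) = (γ:WithTop Γ) := hγS.1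
    have hγne : γ ≠ 0 := hγS.2
    have hγpos : 0 < γ := by
      have hl := sp_lower' T2 hγsp
      rw [hvone, ← WithTop.coe_zero] at hl
      exact lt_of_le_of_ne (by exact_mod_cast hl) (Ne.symm hγne)
    set u := tr 1 γ with hu
    have hspu : {γ' : Γ | v (u - tr u γ') = (γ':WithTop Γ)} = {(0:Γ)} := by
      apply Set.eq_singleton_iff_unique_mem.mpr
      constructor
      · exact (mem_sp_tr' hv0 hvm hva T1 T2 T4a hγpos).mpr h0mem
      · intro y hy
        simp only [Set.mem_setOf_eq] at hy
        rcases lt_or_ge y γ with hyγ | hyγ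
        · have hy1 : v ((1:F) - tr 1 y) = (y:WithTop Γ) :=
            (mem_sp_tr' hv0 hvm hva T1 T2 T4a hyγ).mp hy
          by_contra hyne
          exact absurd (hwf.min_le hSne ⟨hy1, hyne⟩) (not_le.mpr hyγ)
        · exact absurd hy (not_mem_sp_tr' hv0 T1 T2 T3 T4a hyγ)
    have hvu : v u = 0 := by
      have hlt : v (1:F) < v ((1:F) - u) := by
        rw [hvone, hγsp, ← WithTop.coe_zero]
        exact_mod_cast hγpos
      have hs := v_sub_of_lt' hv0 hvm hva hlt
      rw [sub_sub_cancel_left, hneg] at hs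
      rw [hs, hvone]
    have hkey : v (u*u - tr (u*u) γ) = (γ:WithTop Γ) := by
      have hfac : (1:F) - u*u = (1 - u) * (1 + u) := by ring
      have hv1u : (γ:WithTop Γ) ≤ v ((1:F) - u*u) := by
        rw [hfac, hvm, hγsp]
        have h1u : (0:WithTop Γ) ≤ v (1 + u) := by
          have hm := hva 1 u
          rw [hvone, hvu, min_self] at hm
          exact hm
        calc (γ:WithTop Γ) = (γ:WithTop Γ) + 0 := by rw [add_zero]
          _ ≤ (γ:WithTop Γ) + v (1+u) := add_le_add_right h1u _
      have htru : tr (u*u) γ = u := by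
        have h4 := T4a (1 - u*u) (u*u) γ
        rw [sub_add_cancel] at h4
        rw [T2 _ _ hv1u, zero_add] at h4
        exact h4.symm
      rw [htru]
      have he : u*u - u = u * (u - 1) := by ring
      rw [he, hvm, hvu, zero_add, ← neg_sub (1:F) u, hneg, hγsp]
    have hbound := hyp u ⟨0, hspu⟩ u γ (by
      intro β hβ
      rw [hspu, Set.mem_singleton_iff] at hβ
      rw [hβ]; exact hγpos) γ hkey
    rw [hvu, zero_add] at hbound
    exact absurd hbound (lt_irrefl _)
  -- generic facts about singleton spectra
  have hsing : ∀ (x : F) (d : Γ), {γ : Γ | v (x - tr x γ) = (γ:WithTop Γ)} = {d} →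
      x ≠ 0 ∧ v x = (d:WithTop Γ) := by
    intro x d hx
    have hxne : x ≠ 0 := by
      intro h0
      have hd : v (x - tr x d) = (d:WithTop Γ) := by
        have hmm : d ∈ {γ : Γ | v (x - tr x γ) = (γ:WithTop Γ)} := by
          rw [hx]; exact rfl
        exact hmm
      rw [h0, T2 0 d (by rw [(hv0 0).2 rfl]; exact le_top), sub_zero, (hv0 0).2 rfl] at hd
      exact WithTop.coe_ne_top hd.symm
    have hvx : v x ≠ ⊤ := fun ht => hxne ((hv0 x).1 ht)
    obtain ⟨a, ha⟩ := WithTop.ne_top_iff_exists.mp hvx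
    have hmem : a ∈ {γ : Γ | v (x - tr x γ) = (γ:WithTop Γ)} := v_mem_sp' T2 ha.symm
    rw [hx, Set.mem_singleton_iff] at hmem
    exact ⟨hxne, by rw [← ha, hmem]⟩
  refine ⟨⟨0, part1⟩, ?_, ?_⟩
  · -- products
    rintro f g ⟨a', hf⟩ ⟨b', hg⟩
    obtain ⟨hfne, hvf⟩ := hsing f a' hf
    obtain ⟨hgne, hvg⟩ := hsing g b' hg
    refine ⟨a' + b', ?_⟩
    have hvfg : v (f * g) = ((a' + b' : Γ) : WithTop Γ) := by
      rw [hvm, hvf, hvg, WithTop.coe_add]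
    apply Set.eq_singleton_iff_unique_mem.mpr
    refine ⟨v_mem_sp' T2 hvfg, ?_⟩
    intro δ hδ
    simp only [Set.mem_setOf_eq] at hδ
    have hlow : ((a'+b' : Γ):WithTop Γ) ≤ (δ:WithTop Γ) := hvfg ▸ sp_lower' T2 hδ
    have hlow' : a' + b' ≤ δ := by exact_mod_cast hlow
    rcases eq_or_lt_of_le hlow' with he | hlt
    · exact he.symm
    · exfalso
      have hb := hyp f ⟨a', hf⟩ g (δ - a') (by
        intro β hβ
        rw [hg, Set.mem_singleton_iff] at hβ
        rw [hβ, lt_sub_iff_add_lt]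
        calc b' + a' = a' + b' := add_comm _ _
          _ < δ := hlt) δ hδ
      rw [hvf, ← WithTop.coe_add] at hb
      have hc : a' + (δ - a') = δ := by abel
      rw [hc] at hb
      exact absurd hb (lt_irrefl _)
  · -- inverses
    rintro f ⟨a', hf⟩
    obtain ⟨hfne, hvf⟩ := hsing f a' hf
    have hfi : f⁻¹ ≠ 0 := inv_ne_zero hfne
    have hvfi : v f⁻¹ = ((-a' : Γ) : WithTop Γ) := by
      have h := hvm f f⁻¹
      rw [mul_inv_cancel₀ hfne, hvone, hvf] at h
      have hvt : v f⁻¹ ≠ ⊤ := fun ht => hfi ((hv0 _).1 ht)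
      obtain ⟨b, hb⟩ := WithTop.ne_top_iff_exists.mp hvt
      rw [← hb, ← WithTop.coe_add] at h
      have h' : a' + b = 0 := by exact_mod_cast h.symm
      rw [← hb, eq_neg_of_add_eq_zero_right h']
    refine ⟨-a', ?_⟩
    apply Set.eq_singleton_iff_unique_mem.mpr
    refine ⟨v_mem_sp' T2 hvfi, ?_⟩
    intro δ hδ
    simp only [Set.mem_setOf_eq] at hδ
    by_contra hne
    have hwf : ({γ : Γ | v (f⁻¹ - tr f⁻¹ γ) = (γ:WithTop Γ)} \ {-a'}).IsWF :=
      (T5 f⁻¹).mono Set.diff_subset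
    have hSne : ({γ : Γ | v (f⁻¹ - tr f⁻¹ γ) = (γ:WithTop Γ)} \ {-a'}).Nonempty :=
      ⟨δ, hδ, hne⟩
    set δ₀ := hwf.min hSne with hδ₀def
    have hδ₀S := hwf.min_mem hSne
    have hδ₀sp : v (f⁻¹ - tr f⁻¹ δ₀) = (δ₀:WithTop Γ) := hδ₀S.1
    have hδ₀ne : δ₀ ≠ -a' := hδ₀S.2
    have hδ₀gt : -a' < δ₀ := by
      have hl := sp_lower' T2 hδ₀sp
      rw [hvfi] at hl
      exact lt_of_le_of_ne (by exact_mod_cast hl) (Ne.symm hδ₀ne)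
    set h := tr f⁻¹ δ₀ with hh
    have hsph : {γ' : Γ | v (h - tr h γ') = (γ':WithTop Γ)} = {-a'} := by
      apply Set.eq_singleton_iff_unique_mem.mpr
      constructor
      · exact (mem_sp_tr' hv0 hvm hva T1 T2 T4a hδ₀gt).mpr (v_mem_sp' T2 hvfi)
      · intro y hy
        simp only [Set.mem_setOf_eq] at hy
        rcases lt_or_ge y δ₀ with hyδ | hyδ
        · have hy1 := (mem_sp_tr' hv0 hvm hva T1 T2 T4a hyδ).mp hy
          by_contra hyne
          exact absurd (hwf.min_le hSne ⟨hy1, hyne⟩) (not_le.mpr hyδ)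
        · exact absurd hy (not_mem_sp_tr' hv0 T1 T2 T3 T4a hyδ)
    have hvh : v h = ((-a':Γ):WithTop Γ) := by
      have hlt : v f⁻¹ < v (f⁻¹ - h) := by
        rw [hvfi, hδ₀sp]
        exact_mod_cast hδ₀gt
      have hs := v_sub_of_lt' hv0 hvm hva hlt
      rw [sub_sub_cancel_left, hneg, hvfi] at hs
      exact hs
    set μ := a' + δ₀ with hμ
    have hμpos : 0 < μ := by
      rw [hμ]
      have hz := add_lt_add_right hδ₀gt a'
      rw [add_neg_cancel] at hz
      exact hz
    have hw : v ((f⁻¹ - h) * f) = (μ:WithTop Γ) := by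
      rw [hvm, hδ₀sp, hvf, ← WithTop.coe_add]
      norm_cast
      rw [hμ]; abel
    have h1mhf : (1:F) - h * f = (f⁻¹ - h) * f := by
      rw [sub_mul, inv_mul_cancel₀ hfne]
    have hμsp : v (h * f - tr (h * f) μ) = (μ:WithTop Γ) := by
      have htr : tr (h*f) μ = tr 1 μ := by
        have h4 := T4a (1 - h*f) (h*f) μ
        rw [sub_add_cancel, h1mhf] at h4
        rw [T2 _ _ (le_of_eq hw.symm), zero_add] at h4
        exact h4.symm
      rw [htr]
      have hsplit : h*f - tr 1 μ = ((1:F) - tr 1 μ) - ((1:F) - h*f) := by ring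
      rw [hsplit, h1mhf]
      have hμns : v ((1:F) - tr 1 μ) ≠ (μ:WithTop Γ) := by
        intro hc
        have hmm : μ ∈ {γ : Γ | v ((1:F) - tr 1 γ) = (γ:WithTop Γ)} := hc
        rw [part1, Set.mem_singleton_iff] at hmm
        exact (ne_of_gt hμpos) hmm
      have hμgt : (μ:WithTop Γ) < v ((1:F) - tr 1 μ) :=
        lt_of_le_of_ne (T1 1 μ) (Ne.symm hμns)
      rw [← hw] at hμgt
      rw [v_sub_of_lt' hv0 hvm hva hμgt, hw]
    have hb := hyp h ⟨-a', hsph⟩ f (a' + μ) (by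
      intro β hβ
      rw [hf, Set.mem_singleton_iff] at hβ
      rw [hβ]
      exact lt_add_of_pos_right a' hμpos) μ hμsp
    rw [hvh, ← WithTop.coe_add] at hb
    have hc : -a' + (a' + μ) = μ := by abel
    rw [hc] at hb
    exact absurd hb (lt_irrefl _)
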